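/- Consider the third-order consensus closed-loop matrix A = [[0, I, 0], [0, 0, I], [−a₀L, −a₁L, −a₂L]] with a₀, a₁, a₂ > 0 and L a symmetric Laplacian. The eigenvalues of A restricted to the mode associated with Laplacian eigenvalue λ > 0 are the roots of s³ + a₂λs² + a₁λs + a₀λ = 0, and by the Routh–Hurwitz criterion all roots have negative real part if and only if a₂λ·a₁λ > a₀λ, i.e., λ > a₀/(a₁a₂). Consequently, a necessary condition for asymptotic convergence to consensus is λ₂ > a₀/(a₁a₂). -/
import Mathlib


open Matrix

/-- Sorted (ascending) eigenvalues of a Hermitian matrix. -/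
noncomputable def sortedEig {N : ℕ} {L : Matrix (Fin N) (Fin N) ℝ}
    (hL : L.IsHermitian) : Fin N → ℝ :=
  hL.eigenvalues ∘ Tuple.sort hL.eigenvalues

/-- The closed-loop matrix A = [[0, I, 0], [0, 0, I], [−a₀L, −a₁L, −a₂L]] of
third-order consensus, indexed by Fin 3 × Fin N. -/
noncomputable def thirdA {N : ℕ} (a₀ a₁ a₂ : ℝ) (L : Matrix (Fin N) (Fin N) ℝ) :
    Matrix (Fin 3 × Fin N) (Fin 3 × Fin N) ℝ :=
  Matrix.of fun p q =>
    if p.1 = 0 ∧ q.1 = 1 then (if p.2 = q.2 then 1 else 0)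
    else if p.1 = 1 ∧ q.1 = 2 then (if p.2 = q.2 then 1 else 0)
    else if p.1 = 2 ∧ q.1 = 0 then -a₀ * L p.2 q.2
    else if p.1 = 2 ∧ q.1 = 1 then -a₁ * L p.2 q.2
    else if p.1 = 2 ∧ q.1 = 2 then -a₂ * L p.2 q.2
    else 0


lemma mem_spec_iff {n : Type*} [Fintype n] [DecidableEq n] (M : Matrix n n ℂ) (s : ℂ) :
    s ∈ spectrum ℂ M ↔ ∃ v : n → ℂ, v ≠ 0 ∧ M *ᵥ v = s • v := by
  rw [spectrum.mem_iff, Matrix.isUnit_iff_isUnit_det, isUnit_iff_ne_zero, not_not,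
    ← Matrix.exists_mulVec_eq_zero_iff]
  constructor
  · rintro ⟨v, hv, h⟩
    refine ⟨v, hv, ?_⟩
    rw [Algebra.algebraMap_eq_smul_one, Matrix.sub_mulVec, Matrix.smul_mulVec,
      Matrix.one_mulVec, sub_eq_zero] at h
    exact h.symm
  · rintro ⟨v, hv, h⟩
    refine ⟨v, hv, ?_⟩
    rw [Algebra.algebraMap_eq_smul_one, Matrix.sub_mulVec, Matrix.smul_mulVec,
      Matrix.one_mulVec, sub_eq_zero, h]


lemma exists_complex_eigvec {N : ℕ} {L : Matrix (Fin N) (Fin N) ℝ} (hH : L.IsHermitian)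
    (i : Fin N) : ∃ x : Fin N → ℂ, x ≠ 0 ∧
      L.map (Complex.ofReal ·) *ᵥ x = (hH.eigenvalues i : ℂ) • x := by
  set u : Fin N → ℝ := ⇑(hH.eigenvectorBasis i) with hu_def
  have hu : L *ᵥ u = hH.eigenvalues i • u := hH.mulVec_eigenvectorBasis i
  have hu0 : u ≠ 0 := by
    intro h
    apply hH.eigenvectorBasis.orthonormal.ne_zero i
    apply PiLp.ext
    intro n
    exact congrFun h n
  refine ⟨fun n => (u n : ℂ), ?_, ?_⟩
  · intro h
    apply hu0
    funext n
    have := congrFun h n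
    simpa using this
  · funext n
    have h1 : ∑ m, L n m * u m = hH.eigenvalues i * u n := by
      have := congrFun hu n
      simpa [Matrix.mulVec, dotProduct] using this
    simp only [Matrix.mulVec, dotProduct, Matrix.map_apply, Pi.smul_apply,
      smul_eq_mul]
    calc ∑ m, (L n m : ℂ) * (u m : ℂ) = ((∑ m, L n m * u m : ℝ) : ℂ) := by push_cast; ring
    _ = ((hH.eigenvalues i * u n : ℝ) : ℂ) := by rw [h1]
    _ = (hH.eigenvalues i : ℂ) * (u n : ℂ) := by push_cast; ring


lemma eigval_of_complex_eigvec {N : ℕ} {L : Matrix (Fin N) (Fin N) ℝ} (hH : L.IsHermitian)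
    (μ : ℂ) (x : Fin N → ℂ) (hx : x ≠ 0)
    (h : L.map (Complex.ofReal ·) *ᵥ x = μ • x) :
    ∃ i, μ = (hH.eigenvalues i : ℂ) := by
  classical
  set Lc := L.map (Complex.ofReal ·) with hLc
  have hker : (μ • (1 : Matrix (Fin N) (Fin N) ℂ) - Lc) *ᵥ x = 0 := by
    rw [Matrix.sub_mulVec, Matrix.smul_mulVec, Matrix.one_mulVec, h, sub_self]
  have hdet0 : (μ • (1 : Matrix (Fin N) (Fin N) ℂ) - Lc).det = 0 :=
    Matrix.exists_mulVec_eq_zero_iff.mp ⟨x, hx, hker⟩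
  -- compute the determinant
  set U : Matrix (Fin N) (Fin N) ℝ := (hH.eigenvectorUnitary : Matrix (Fin N) (Fin N) ℝ)
  have hspec : L = U * diagonal (RCLike.ofReal ∘ hH.eigenvalues) * star U := hH.spectral_theorem
  have hU1 : U * star U = 1 := Matrix.mem_unitaryGroup_iff.mp hH.eigenvectorUnitary.2
  set f : ℝ →+* ℂ := Complex.ofRealHom
  have hLc2 : Lc = U.map f * diagonal (fun i => (hH.eigenvalues i : ℂ)) * (star U).map f := by
    show L.map f = _
    conv_lhs => rw [hspec]
    rw [Matrix.map_mul, Matrix.map_mul]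
    congr 1
    congr 1
    rw [Matrix.diagonal_map (by simp)]
    rfl
  have hU1' : star U * U = 1 := Matrix.mem_unitaryGroup_iff'.mp hH.eigenvectorUnitary.2
  have hU1c : U.map f * (star U).map f = 1 := by
    rw [← Matrix.map_mul, hU1, Matrix.map_one f (by simp) (by simp)]
  have hU1c' : (star U).map f * U.map f = 1 := by
    rw [← Matrix.map_mul, hU1', Matrix.map_one f (by simp) (by simp)]
  have key : (μ • (1 : Matrix (Fin N) (Fin N) ℂ) - Lc)
      = U.map f * (μ • 1 - diagonal (fun i => (hH.eigenvalues i : ℂ))) * (star U).map f := by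
    rw [Matrix.mul_sub, Matrix.sub_mul, hLc2]
    congr 1
    rw [Matrix.mul_smul, Matrix.mul_one, Matrix.smul_mul, hU1c]
  rw [key, Matrix.det_mul, Matrix.det_mul, mul_comm, ← mul_assoc, ← Matrix.det_mul,
    hU1c', Matrix.det_one, one_mul] at hdet0
  have hdiag : (μ • (1 : Matrix (Fin N) (Fin N) ℂ) - diagonal (fun i => (hH.eigenvalues i : ℂ)))
      = diagonal (fun i => μ - (hH.eigenvalues i : ℂ)) := by
    ext i j
    rcases eq_or_ne i j with rfl | hij
    · simp [Matrix.one_apply]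
    · simp [Matrix.one_apply_ne hij, Matrix.diagonal_apply_ne _ hij]
  rw [hdiag, Matrix.det_diagonal, Finset.prod_eq_zero_iff] at hdet0
  obtain ⟨i, _, hi⟩ := hdet0
  exact ⟨i, by linear_combination hi⟩


lemma cubic_neg_real_root (b c d : ℝ) (hb : 0 < b) (hc : 0 < c) (hd : 0 < d) :
    ∃ r : ℝ, r < 0 ∧ r ^ 3 + b * r ^ 2 + c * r + d = 0 := by
  set f : ℝ → ℝ := fun x => x ^ 3 + b * x ^ 2 + c * x + d with hf
  have hcont : ContinuousOn f (Set.Icc (-(1 + b + c + d)) 0) := by fun_prop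
  have hM : (1:ℝ) ≤ 1 + b + c + d := by linarith
  have hneg : f (-(1 + b + c + d)) ≤ 0 := by
    simp only [hf]
    nlinarith [sq_nonneg (1 + b + c + d), sq_nonneg b, mul_pos hb hc, mul_pos hc hd]
  have hsub := intermediate_value_Icc (by linarith : -(1 + b + c + d) ≤ (0:ℝ)) hcont
  have h0 : (0:ℝ) ∈ Set.Icc (f (-(1 + b + c + d))) (f 0) := by
    constructor
    · exact hneg
    · simp [hf]; linarith
  obtain ⟨r, hr_mem, hr⟩ := hsub h0
  refine ⟨r, ?_, hr⟩
  rcases lt_or_eq_of_le hr_mem.2 with h | h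
  · exact h
  · exfalso; rw [h] at hr; simp [hf] at hr; linarith

lemma routh_cubic (b c d : ℝ) (hb : 0 < b) (hc : 0 < c) (hd : 0 < d) :
    (∀ s : ℂ, s ^ 3 + (b : ℂ) * s ^ 2 + (c : ℂ) * s + (d : ℂ) = 0 → s.re < 0) ↔ d < b * c := by
  obtain ⟨r, hr0, hr⟩ := cubic_neg_real_root b c d hb hc hd
  obtain ⟨p, hp⟩ : ∃ p : ℝ, p = b + r := ⟨_, rfl⟩
  obtain ⟨q, hq⟩ : ∃ q : ℝ, q = c + r * p := ⟨_, rfl⟩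
  have hrC : (r:ℂ) ^ 3 + (b:ℂ) * (r:ℂ) ^ 2 + (c:ℂ) * (r:ℂ) + (d:ℂ) = 0 := by exact_mod_cast hr
  have key : ∀ s : ℂ, s ^ 3 + (b : ℂ) * s ^ 2 + (c : ℂ) * s + (d : ℂ)
      = (s - r) * (s ^ 2 + p * s + q) := by
    intro s
    rw [hq, hp]
    push_cast
    linear_combination hrC
  have hfac : b * c - d = p * (c + r ^ 2) := by rw [hp]; linear_combination -hr
  have hcr : (0:ℝ) < c + r ^ 2 := by positivity
  constructor
  · intro H
    have hppos : 0 < p := by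
      rcases le_or_gt (p ^ 2 - 4 * q) 0 with hdisc | hdisc
      · -- complex pair root
        have hβnn : (0:ℝ) ≤ q - p ^ 2 / 4 := by linarith
        set β : ℝ := Real.sqrt (q - p ^ 2 / 4) with hβ
        have hβ2 : β ^ 2 = q - p ^ 2 / 4 := Real.sq_sqrt hβnn
        set s : ℂ := Complex.mk (-p / 2) β with hs
        have hroot : s ^ 2 + (p:ℂ) * s + q = 0 := by
          rw [Complex.ext_iff]
          constructor
          · simp [hs, pow_two, Complex.mul_re, Complex.mul_im]
            nlinarith [hβ2]
          · simp [hs, pow_two, Complex.mul_re, Complex.mul_im]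
            ring
        have := H s (by rw [key s, hroot, mul_zero])
        simp [hs] at this
        linarith
      · -- real root of the quadratic
        have ht2' : (0:ℝ) ≤ p ^ 2 - 4 * q := by linarith
        set t : ℝ := Real.sqrt (p ^ 2 - 4 * q) with ht
        have ht2 : t ^ 2 = p ^ 2 - 4 * q := Real.sq_sqrt ht2'
        have ht0 : 0 ≤ t := Real.sqrt_nonneg _
        set x : ℝ := (-p + t) / 2 with hx
        have hx0 : x ^ 2 + p * x + q = 0 := by rw [hx]; nlinarith [ht2]
        have hroot : (x:ℂ) ^ 2 + (p:ℂ) * (x:ℂ) + (q:ℂ) = 0 := by exact_mod_cast hx0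
        have := H x (by rw [key (x:ℂ), hroot, mul_zero])
        simp at this
        rw [hx] at this
        linarith
    nlinarith
  · intro hbc s hs
    have hppos : 0 < p := by nlinarith
    have hqpos : 0 < q := by
      have hrq : r * q = -d := by rw [hq, hp]; linear_combination hr
      nlinarith
    rw [key s, mul_eq_zero] at hs
    rcases hs with h | h
    · rw [sub_eq_zero] at h
      rw [h]
      simpa using hr0
    · set x : ℝ := s.re
      set y : ℝ := s.im
      have hre : x ^ 2 - y ^ 2 + p * x + q = 0 := by
        have := congrArg Complex.re h
        simpa [pow_two, Complex.mul_re, Complex.mul_im] using this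
      have him : y * (2 * x + p) = 0 := by
        have := congrArg Complex.im h
        simp [pow_two, Complex.mul_re, Complex.mul_im] at this
        linarith
      rcases mul_eq_zero.mp him with hy | hxp
      · by_contra hx
        push_neg at hx
        rw [hy] at hre
        nlinarith
      · linarith

section rows
variable {N : ℕ} (a₀ a₁ a₂ : ℝ) (L : Matrix (Fin N) (Fin N) ℝ)

lemma thirdA_mulVec_zero (v : Fin 3 × Fin N → ℂ) (n : Fin N) :
    ((thirdA a₀ a₁ a₂ L).map (Complex.ofReal ·) *ᵥ v) (0, n) = v (1, n) := by
  simp only [Matrix.mulVec, dotProduct, Fintype.sum_prod_type, Fin.sum_univ_three,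
    Matrix.map_apply, thirdA, Matrix.of_apply]
  simp +decide [apply_ite (Complex.ofReal ·), ite_mul, Finset.sum_ite_eq]

lemma thirdA_mulVec_one (v : Fin 3 × Fin N → ℂ) (n : Fin N) :
    ((thirdA a₀ a₁ a₂ L).map (Complex.ofReal ·) *ᵥ v) (1, n) = v (2, n) := by
  simp only [Matrix.mulVec, dotProduct, Fintype.sum_prod_type, Fin.sum_univ_three,
    Matrix.map_apply, thirdA, Matrix.of_apply]
  simp +decide [apply_ite (Complex.ofReal ·), ite_mul, Finset.sum_ite_eq]

lemma thirdA_mulVec_two (v : Fin 3 × Fin N → ℂ) (n : Fin N) :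
    ((thirdA a₀ a₁ a₂ L).map (Complex.ofReal ·) *ᵥ v) (2, n) =
      -(a₀:ℂ) * ∑ m, (L n m : ℂ) * v (0, m) + -(a₁:ℂ) * ∑ m, (L n m : ℂ) * v (1, m)
        + -(a₂:ℂ) * ∑ m, (L n m : ℂ) * v (2, m) := by
  simp only [Matrix.mulVec, dotProduct, Fintype.sum_prod_type, Fin.sum_univ_three,
    Matrix.map_apply, thirdA, Matrix.of_apply]
  simp +decide only [if_true, if_false]
  rw [Finset.mul_sum, Finset.mul_sum, Finset.mul_sum]
  congr 1
  · congr 1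
    · exact Finset.sum_congr rfl fun m _ => by push_cast; ring
    · exact Finset.sum_congr rfl fun m _ => by push_cast; ring
  · exact Finset.sum_congr rfl fun m _ => by push_cast; ring

end rows

lemma spectrum_thirdA {N : ℕ} {L : Matrix (Fin N) (Fin N) ℝ} (hH : L.IsHermitian)
    {a₀ a₁ a₂ : ℝ} (ha₀ : 0 < a₀) (s : ℂ) :
    s ∈ spectrum ℂ ((thirdA a₀ a₁ a₂ L).map (Complex.ofReal ·)) ↔
    ∃ i : Fin N, s ^ 3 + ((a₂ * hH.eigenvalues i : ℝ) : ℂ) * s ^ 2 +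
      ((a₁ * hH.eigenvalues i : ℝ) : ℂ) * s + ((a₀ * hH.eigenvalues i : ℝ) : ℂ) = 0 := by
  rw [mem_spec_iff]
  constructor
  · rintro ⟨v, hv, heig⟩
    set x : Fin N → ℂ := fun n => v (0, n) with hxdef
    have h0 : ∀ n, v (1, n) = s * x n := by
      intro n
      have := congrFun heig (0, n)
      rw [thirdA_mulVec_zero] at this
      simpa using this
    have h1 : ∀ n, v (2, n) = s ^ 2 * x n := by
      intro n
      have := congrFun heig (1, n)
      rw [thirdA_mulVec_one] at this
      simp only [Pi.smul_apply, smul_eq_mul] at this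
      rw [this, h0]; ring
    obtain ⟨w, hwdef⟩ : ∃ w : ℂ, w = (a₀ : ℂ) + (a₁ : ℂ) * s + (a₂ : ℂ) * s ^ 2 := ⟨_, rfl⟩
    have h2 : ∀ n, -w * ∑ m, (L n m : ℂ) * x m = s ^ 3 * x n := by
      intro n
      have := congrFun heig (2, n)
      rw [thirdA_mulVec_two] at this
      simp only [Pi.smul_apply, smul_eq_mul] at this
      have e1 : ∑ m, (L n m : ℂ) * v (1, m) = s * ∑ m, (L n m : ℂ) * x m := by
        rw [Finset.mul_sum]; exact Finset.sum_congr rfl fun m _ => by rw [h0]; ring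
      have e2 : ∑ m, (L n m : ℂ) * v (2, m) = s ^ 2 * ∑ m, (L n m : ℂ) * x m := by
        rw [Finset.mul_sum]; exact Finset.sum_congr rfl fun m _ => by rw [h1]; ring
      rw [e1, e2] at this
      rw [hwdef]
      rw [h1 n] at this
      linear_combination this
    have hx : x ≠ 0 := by
      intro hx0
      apply hv
      funext p
      obtain ⟨j, n⟩ := p
      have hxn : x n = 0 := congrFun hx0 n
      have b0 : v ((0 : Fin 3), n) = 0 := hxn
      have b1 : v ((1 : Fin 3), n) = 0 := by rw [h0, hxn, mul_zero]
      have b2 : v ((2 : Fin 3), n) = 0 := by rw [h1, hxn, mul_zero]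
      fin_cases j
      · exact b0
      · exact b1
      · exact b2
    obtain ⟨n₀, hn₀⟩ := Function.ne_iff.mp hx
    have hw : w ≠ 0 := by
      intro hw0
      have hs3 : s ^ 3 * x n₀ = 0 := by rw [← h2 n₀, hw0]; ring
      have hs0 : s = 0 := by
        rcases mul_eq_zero.mp hs3 with h | h
        · exact pow_eq_zero_iff (by norm_num) |>.mp h
        · exact absurd h hn₀
      rw [hs0, hw0] at hwdef
      have : (a₀ : ℂ) = 0 := by rw [hwdef]; ring
      exact absurd (by exact_mod_cast this) (ne_of_gt ha₀)
    have hLx : L.map (Complex.ofReal ·) *ᵥ x = (-s ^ 3 / w) • x := by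
      funext n
      simp only [Matrix.mulVec, dotProduct, Matrix.map_apply, Pi.smul_apply,
        smul_eq_mul]
      have := h2 n
      field_simp
      linear_combination -this
    obtain ⟨i, hi⟩ := eigval_of_complex_eigvec hH _ x hx hLx
    refine ⟨i, ?_⟩
    have hmul : (hH.eigenvalues i : ℂ) * w = -s ^ 3 := by
      rw [← hi, div_mul_cancel₀ _ hw]
    push_cast
    rw [hwdef] at hmul
    linear_combination hmul
  · rintro ⟨i, hs⟩
    obtain ⟨x, hx, hLx⟩ := exists_complex_eigvec hH i
    obtain ⟨lam, hlam⟩ : ∃ lam : ℂ, lam = (hH.eigenvalues i : ℂ) := ⟨_, rfl⟩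
    rw [← hlam] at hLx
    set v' : Fin 3 × Fin N → ℂ :=
      fun p => (if p.1 = 0 then 1 else if p.1 = 1 then s else s ^ 2) * x p.2 with hv'
    refine ⟨v', ?_, ?_⟩
    · obtain ⟨n₀, hn₀⟩ := Function.ne_iff.mp hx
      intro h
      apply hn₀
      have := congrFun h ((0 : Fin 3), n₀)
      simpa [hv'] using this
    · funext p
      obtain ⟨j, n⟩ := p
      have hS : ∀ (c : ℂ), ∑ m, (L n m : ℂ) * (c * x m) = c * (lam * x n) := by
        intro c
        have := congrFun hLx n
        simp only [Matrix.mulVec, dotProduct, Matrix.map_apply, Pi.smul_apply,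
          smul_eq_mul] at this
        calc ∑ m, (L n m : ℂ) * (c * x m) = c * ∑ m, (L n m : ℂ) * x m := by
              rw [Finset.mul_sum]; exact Finset.sum_congr rfl fun m _ => by ring
        _ = c * (lam * x n) := by rw [this]
      have B0 : ((thirdA a₀ a₁ a₂ L).map (Complex.ofReal ·) *ᵥ v') ((0 : Fin 3), n)
          = (s • v') ((0 : Fin 3), n) := by
        rw [thirdA_mulVec_zero]
        simp [hv']
      have B1 : ((thirdA a₀ a₁ a₂ L).map (Complex.ofReal ·) *ᵥ v') ((1 : Fin 3), n)
          = (s • v') ((1 : Fin 3), n) := by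
        rw [thirdA_mulVec_one]
        simp [hv', pow_two]
        ring
      have B2 : ((thirdA a₀ a₁ a₂ L).map (Complex.ofReal ·) *ᵥ v') ((2 : Fin 3), n)
          = (s • v') ((2 : Fin 3), n) := by
        rw [thirdA_mulVec_two]
        simp only [hv', Pi.smul_apply, smul_eq_mul]
        simp +decide only [if_true, if_false]
        rw [hS 1, hS s, hS (s ^ 2), hlam]
        push_cast at hs
        linear_combination -(x n) * hs
      fin_cases j
      · exact B0
      · exact B1
      · exact B2

/-- Third-order consensus: the eigenvalues of A are exactly the roots of the
cubics s³ + a₂λᵢs² + a₁λᵢs + a₀λᵢ over the Laplacian eigenvalues λᵢ; by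
Routh–Hurwitz, for λ > 0 all roots of the cubic have negative real part iff
λ > a₀/(a₁a₂); consequently, asymptotic convergence to consensus (all nonzero
eigenvalues of A in the open left half-plane) requires λ₂ > a₀/(a₁a₂). -/
theorem stmt14 {N : ℕ} (hN : 2 ≤ N) (L : Matrix (Fin N) (Fin N) ℝ)
    (hH : L.IsHermitian) (hPSD : L.PosSemidef)
    (hone : L *ᵥ (fun _ => (1 : ℝ)) = 0)
    (hl2 : 0 < sortedEig hH ⟨1, by omega⟩)
    (a₀ a₁ a₂ : ℝ) (ha₀ : 0 < a₀) (ha₁ : 0 < a₁) (ha₂ : 0 < a₂) :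
    (∀ s : ℂ,
      s ∈ spectrum ℂ ((thirdA a₀ a₁ a₂ L).map (Complex.ofReal ·)) ↔
      ∃ i : Fin N,
        s ^ 3 + (a₂ * hH.eigenvalues i : ℝ) * s ^ 2 +
          (a₁ * hH.eigenvalues i : ℝ) * s + (a₀ * hH.eigenvalues i : ℝ) = 0) ∧
    (∀ lam : ℝ, 0 < lam →
      ((∀ s : ℂ,
          s ^ 3 + (a₂ * lam : ℝ) * s ^ 2 + (a₁ * lam : ℝ) * s + (a₀ * lam : ℝ) = 0 →
          s.re < 0) ↔ a₀ / (a₁ * a₂) < lam)) ∧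
    ((∀ s ∈ spectrum ℂ ((thirdA a₀ a₁ a₂ L).map (Complex.ofReal ·)),
        s ≠ 0 → s.re < 0) →
      a₀ / (a₁ * a₂) < sortedEig hH ⟨1, by omega⟩) := by
  have part1 : ∀ s : ℂ,
      s ∈ spectrum ℂ ((thirdA a₀ a₁ a₂ L).map (Complex.ofReal ·)) ↔
      ∃ i : Fin N,
        s ^ 3 + (a₂ * hH.eigenvalues i : ℝ) * s ^ 2 +
          (a₁ * hH.eigenvalues i : ℝ) * s + (a₀ * hH.eigenvalues i : ℝ) = 0 :=
    fun s => spectrum_thirdA hH ha₀ s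
  have part2 : ∀ lam : ℝ, 0 < lam →
      ((∀ s : ℂ,
          s ^ 3 + (a₂ * lam : ℝ) * s ^ 2 + (a₁ * lam : ℝ) * s + (a₀ * lam : ℝ) = 0 →
          s.re < 0) ↔ a₀ / (a₁ * a₂) < lam) := by
    intro lam hlam
    rw [routh_cubic (a₂ * lam) (a₁ * lam) (a₀ * lam) (by positivity) (by positivity)
      (by positivity), div_lt_iff₀ (by positivity)]
    constructor <;> intro h <;> nlinarith
  refine ⟨part1, part2, ?_⟩
  intro H
  apply (part2 _ hl2).mp
  intro s hs
  have hsmem : s ∈ spectrum ℂ ((thirdA a₀ a₁ a₂ L).map (Complex.ofReal ·)) :=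
    (part1 s).mpr ⟨Tuple.sort hH.eigenvalues ⟨1, by omega⟩, hs⟩
  have hsne : s ≠ 0 := by
    intro h0
    rw [h0] at hs
    have : ((a₀ * sortedEig hH ⟨1, by omega⟩ : ℝ) : ℂ) = 0 := by
      simpa using hs
    have : a₀ * sortedEig hH ⟨1, by omega⟩ = 0 := by exact_mod_cast this
    nlinarith
  exact H s hsmem hsne
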